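/- Suppose in addition that f is not μ-almost everywhere equal to 0. Then the normalized entropy functional Φ : (0, ∞) → ℝ defined by Φ(r) := (∫_M f^r ln(f^r) dμ)/(∫_M f^r dμ) − ln (∫_M f^r dμ), with the convention 0 · ln 0 = 0, is nondecreasing in r on (0, ∞). -/

import Mathlib

open MeasureTheory ENNReal NNReal

private lemma aux_abs_mul_log_le (u : ℝ) (hu : 0 ≤ u) :
    |u * Real.log u| ≤ 2 * u ^ ((1:ℝ)/2) + u ^ (2:ℝ) := by
  rcases eq_or_lt_of_le hu with h | hu
  · simp [← h]
  rcases le_or_gt u 1 with h1 | h1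
  · have hlog : Real.log u ≤ 0 := Real.log_nonpos hu.le h1
    have habs : |u * Real.log u| = u * (-Real.log u) := by
      rw [abs_of_nonpos (mul_nonpos_of_nonneg_of_nonpos hu.le hlog)]; ring
    have hsq : (0:ℝ) < u ^ ((1:ℝ)/2) := Real.rpow_pos_of_pos hu _
    have hlog2 : -Real.log u = 2 * Real.log (u ^ (-(1:ℝ)/2)) := by
      rw [Real.log_rpow hu]; ring
    have hle : Real.log (u ^ (-(1:ℝ)/2)) ≤ u ^ (-(1:ℝ)/2) := by
      have := Real.log_le_sub_one_of_pos (Real.rpow_pos_of_pos hu (-(1:ℝ)/2))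
      linarith
    have key : u * (-Real.log u) ≤ 2 * u ^ ((1:ℝ)/2) := by
      have h2 : u * (-Real.log u) ≤ u * (2 * u ^ (-(1:ℝ)/2)) := by
        apply mul_le_mul_of_nonneg_left _ hu.le
        rw [hlog2]; linarith
      have h3 : u * (2 * u ^ (-(1:ℝ)/2)) = 2 * u ^ ((1:ℝ)/2) := by
        rw [show u * (2 * u ^ (-(1:ℝ)/2)) = 2 * (u ^ (1:ℝ) * u ^ (-(1:ℝ)/2)) by
          rw [Real.rpow_one]; ring, ← Real.rpow_add hu]
        norm_num
      linarith
    have : (0:ℝ) ≤ u ^ (2:ℝ) := Real.rpow_nonneg hu.le _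
    linarith
  · have hlog : 0 ≤ Real.log u := Real.log_nonneg h1.le
    rw [abs_of_nonneg (mul_nonneg hu.le hlog)]
    have h2 : Real.log u ≤ u - 1 := Real.log_le_sub_one_of_pos hu
    have h3 : u * Real.log u ≤ u * u := by nlinarith
    have h4 : u ^ (2:ℝ) = u * u := by
      rw [show (2:ℝ) = ((2:ℕ):ℝ) by norm_num, Real.rpow_natCast]; ring
    have h5 : (0:ℝ) ≤ 2 * u ^ ((1:ℝ)/2) := by positivity
    rw [h4]; linarith

section Aux

variable {M : Type*} [MeasurableSpace M] {μ : Measure M} {f : M → ℝ}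

private lemma aux_int_log (hfm : Measurable f) (hf0 : ∀ x, 0 ≤ f x)
    (hfLp : ∀ r : ℝ, 0 < r → Integrable (fun x => f x ^ r) μ)
    (r : ℝ) (hr : 0 < r) :
    Integrable (fun x => f x ^ r * Real.log (f x)) μ := by
  have hmeas : AEStronglyMeasurable (fun x => f x ^ r * Real.log (f x)) μ :=
    ((hfm.pow measurable_const).mul (Real.measurable_log.comp hfm)).aestronglyMeasurable
  have hint : Integrable (fun x => (1/r) * (2 * f x ^ (r/2) + f x ^ (2*r))) μ :=
    (((hfLp (r/2) (by linarith)).const_mul 2).add (hfLp (2*r) (by linarith))).const_mul _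
  refine hint.mono' hmeas (ae_of_all _ fun x => ?_)
  have hb := aux_abs_mul_log_le (f x ^ r) (Real.rpow_nonneg (hf0 x) r)
  have hpt : f x ^ r * Real.log (f x) = (1/r) * (f x ^ r * Real.log (f x ^ r)) := by
    rcases eq_or_lt_of_le (hf0 x) with h | h
    · rw [← h, Real.zero_rpow hr.ne']; ring
    · rw [Real.log_rpow h]; field_simp
  have e1 : (f x ^ r) ^ ((1:ℝ)/2) = f x ^ (r/2) := by
    rw [← Real.rpow_mul (hf0 x)]; ring_nf
  have e2 : (f x ^ r) ^ (2:ℝ) = f x ^ (2*r) := by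
    rw [← Real.rpow_mul (hf0 x)]; ring_nf
  rw [Real.norm_eq_abs, hpt, abs_mul, abs_of_nonneg (by positivity : (0:ℝ) ≤ 1/r)]
  have hble : |f x ^ r * Real.log (f x ^ r)| ≤ 2 * f x ^ (r/2) + f x ^ (2*r) := by
    rw [← e1, ← e2]; exact hb
  have h1r : (0:ℝ) ≤ 1/r := by positivity
  exact mul_le_mul_of_nonneg_left hble h1r

private lemma aux_Zpos (hf0 : ∀ x, 0 ≤ f x)
    (hfLp : ∀ r : ℝ, 0 < r → Integrable (fun x => f x ^ r) μ)
    (hne : ¬ (f =ᵐ[μ] (fun _ => 0))) (r : ℝ) (hr : 0 < r) :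
    0 < ∫ x, f x ^ r ∂μ := by
  have hnn : 0 ≤ᵐ[μ] fun x => f x ^ r :=
    ae_of_all _ fun x => Real.rpow_nonneg (hf0 x) r
  rcases (integral_nonneg (f := fun x => f x ^ r) (μ := μ) fun x => Real.rpow_nonneg (hf0 x) r).lt_or_eq with h | h
  · exact h
  · exfalso; apply hne
    have h0 := (integral_eq_zero_iff_of_nonneg_ae hnn (hfLp r hr)).1 h.symm
    filter_upwards [h0] with x hx
    by_contra hne'
    have hpos : 0 < f x := lt_of_le_of_ne (hf0 x) (Ne.symm hne')
    exact absurd hx (ne_of_gt (Real.rpow_pos_of_pos hpos r))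

private lemma aux_P {r : ℝ} (hfm : Measurable f) (hf0 : ∀ x, 0 ≤ f x)
    (hfi : Integrable (fun x => f x ^ r) μ) (hr : 0 < r)
    (hZ : 0 < ∫ x, f x ^ r ∂μ) :
    ∃ P : Measure M, IsProbabilityMeasure P ∧
      (∀ᵐ x ∂P, 0 < f x) ∧
      (∀ g : M → ℝ, (Integrable g P ↔ Integrable (fun x => f x ^ r * g x) μ)) ∧
      (∀ g : M → ℝ, ∫ x, g x ∂P = (∫ x, f x ^ r * g x ∂μ) / ∫ x, f x ^ r ∂μ) := by
  set Z : ℝ := ∫ x, f x ^ r ∂μ with hZdef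
  set d : M → ℝ≥0 := fun x => Real.toNNReal (f x ^ r) with hd
  have hdm : Measurable d := (hfm.pow measurable_const).real_toNNReal
  have hnn : 0 ≤ᵐ[μ] fun x => f x ^ r := ae_of_all _ fun x => Real.rpow_nonneg (hf0 x) r
  have hlin : ∫⁻ x, (d x : ℝ≥0∞) ∂μ = ENNReal.ofReal Z := by
    exact (ofReal_integral_eq_lintegral_ofReal hfi hnn).symm
  set P : Measure M := (ENNReal.ofReal Z)⁻¹ • μ.withDensity (fun x => (d x : ℝ≥0∞)) with hP
  have hZ0 : ENNReal.ofReal Z ≠ 0 := by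
    simp [ENNReal.ofReal_eq_zero, not_le, hZ]
  have hZtop : ENNReal.ofReal Z ≠ ⊤ := ofReal_ne_top
  have hprob : IsProbabilityMeasure P := by
    constructor
    rw [hP, Measure.smul_apply, withDensity_apply _ MeasurableSet.univ,
      setLIntegral_univ, hlin, smul_eq_mul, ENNReal.inv_mul_cancel hZ0 hZtop]
  refine ⟨P, hprob, ?_, ?_, ?_⟩
  · rw [ae_iff]
    have hset : {x | ¬ 0 < f x} = {x | f x ≤ 0} := by ext x; simp [not_lt]
    have hms : MeasurableSet {x | f x ≤ 0} := measurableSet_le hfm measurable_const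
    rw [hset, hP, Measure.smul_apply, withDensity_apply _ hms]
    have : ∫⁻ x in {x | f x ≤ 0}, (d x : ℝ≥0∞) ∂μ = 0 := by
      rw [← lintegral_zero]
      refine setLIntegral_congr_fun hms (fun x hx => ?_)
      have hx0 : f x = 0 := le_antisymm hx (hf0 x)
      simp [hd, hx0, Real.zero_rpow hr.ne']
    rw [this, smul_eq_mul, mul_zero]
  · intro g
    rw [hP]
    rw [integrable_smul_measure (ENNReal.inv_ne_zero.2 hZtop) (ENNReal.inv_ne_top.2 hZ0)]
    rw [integrable_withDensity_iff_integrable_smul hdm]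
    constructor
    · intro h
      refine h.congr (ae_of_all _ fun x => ?_)
      simp [hd, NNReal.smul_def, Real.coe_toNNReal _ (Real.rpow_nonneg (hf0 x) r)]
    · intro h
      refine h.congr (ae_of_all _ fun x => ?_)
      simp [hd, NNReal.smul_def, Real.coe_toNNReal _ (Real.rpow_nonneg (hf0 x) r)]
  · intro g
    rw [hP, integral_smul_measure, integral_withDensity_eq_integral_smul hdm]
    have : ∀ x, d x • g x = f x ^ r * g x := fun x => by
      simp [hd, NNReal.smul_def, Real.coe_toNNReal _ (Real.rpow_nonneg (hf0 x) r)]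
    simp_rw [this]
    rw [ENNReal.toReal_inv, ENNReal.toReal_ofReal hZ.le, smul_eq_mul]
    field_simp

private lemma aux_ineq1 (hfm : Measurable f) (hf0 : ∀ x, 0 ≤ f x)
    (hfLp : ∀ r : ℝ, 0 < r → Integrable (fun x => f x ^ r) μ)
    (hne : ¬ (f =ᵐ[μ] (fun _ => 0))) {s t : ℝ} (hs : 0 < s) (hst : s < t) :
    Real.log (∫ x, f x ^ t ∂μ) - Real.log (∫ x, f x ^ s ∂μ)
      ≤ (t - s) * ((∫ x, f x ^ t * Real.log (f x) ∂μ) / (∫ x, f x ^ t ∂μ)) := by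
  have ht : 0 < t := hs.trans hst
  have hZt : 0 < ∫ x, f x ^ t ∂μ := aux_Zpos hf0 hfLp hne t ht
  have hZs : 0 < ∫ x, f x ^ s ∂μ := aux_Zpos hf0 hfLp hne s hs
  obtain ⟨P, hprob, hpos, hint, hval⟩ := aux_P hfm hf0 (hfLp t ht) ht hZt
  set G : M → ℝ := fun x => (s - t) * Real.log (f x) with hG
  have hGint : Integrable G P := by
    rw [hint]
    have : (fun x => f x ^ t * ((s - t) * Real.log (f x)))
        = fun x => (s - t) * (f x ^ t * Real.log (f x)) := by funext x; ring
    rw [hG]; rw [this]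
    exact (aux_int_log hfm hf0 hfLp t ht).const_mul _
  have hexpeq : (fun x => Real.exp (G x)) =ᵐ[P] fun x => f x ^ (s - t) := by
    filter_upwards [hpos] with x hx
    rw [hG, Real.rpow_def_of_pos hx, mul_comm]
  have hprod : ∀ x, f x ^ t * f x ^ (s - t) = f x ^ s := by
    intro x
    rw [← Real.rpow_add' (hf0 x) (by linarith : t + (s - t) ≠ 0)]
    norm_num
  have hexint : Integrable (fun x => Real.exp (G x)) P := by
    refine (Integrable.congr ?_ hexpeq.symm)
    rw [hint]
    refine (hfLp s hs).congr (ae_of_all _ fun x => (hprod x).symm)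
  have hjen := (convexOn_exp).map_integral_le (Real.continuous_exp.continuousOn)
    isClosed_univ (ae_of_all _ fun x => Set.mem_univ (G x)) hGint
    (by exact hexint)
  have hGval : ∫ x, G x ∂P = (s - t) * ((∫ x, f x ^ t * Real.log (f x) ∂μ) / ∫ x, f x ^ t ∂μ) := by
    rw [hG, hval]
    have : (fun x => f x ^ t * ((s - t) * Real.log (f x)))
        = fun x => (s - t) * (f x ^ t * Real.log (f x)) := by funext x; ring
    rw [this, integral_const_mul, mul_div_assoc]
  have hEval : ∫ x, Real.exp (G x) ∂P = (∫ x, f x ^ s ∂μ) / ∫ x, f x ^ t ∂μ := by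
    rw [integral_congr_ae hexpeq, hval]
    congr 1
    exact integral_congr_ae (ae_of_all _ fun x => hprod x)
  rw [hGval, hEval] at hjen
  have hlog := Real.log_le_log (Real.exp_pos _) hjen
  rw [Real.log_exp, Real.log_div hZs.ne' hZt.ne'] at hlog
  set D := (∫ x, f x ^ t * Real.log (f x) ∂μ) / ∫ x, f x ^ t ∂μ
  nlinarith [hlog]

private lemma aux_ineq2 (hfm : Measurable f) (hf0 : ∀ x, 0 ≤ f x)
    (hfLp : ∀ r : ℝ, 0 < r → Integrable (fun x => f x ^ r) μ)
    (hne : ¬ (f =ᵐ[μ] (fun _ => 0))) {s t : ℝ} (hs : 0 < s) (hst : s < t) :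
    (∫ x, f x ^ s * Real.log (f x) ∂μ) / (∫ x, f x ^ s ∂μ)
      ≤ (∫ x, f x ^ t * Real.log (f x) ∂μ) / (∫ x, f x ^ t ∂μ) := by
  have ht : 0 < t := hs.trans hst
  have hZt : 0 < ∫ x, f x ^ t ∂μ := aux_Zpos hf0 hfLp hne t ht
  have hZs : 0 < ∫ x, f x ^ s ∂μ := aux_Zpos hf0 hfLp hne s hs
  obtain ⟨P, hprob, hpos, hint, hval⟩ := aux_P hfm hf0 (hfLp s hs) hs hZs
  set h : M → ℝ := fun x => f x ^ (t - s) with hh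
  set g : M → ℝ := fun x => Real.log (f x) with hg
  have hts : (0:ℝ) < t - s := by linarith
  have hprodpt : ∀ x, f x ^ s * f x ^ (t - s) = f x ^ t := by
    intro x
    rw [← Real.rpow_add' (hf0 x) (by linarith : s + (t - s) ≠ 0)]
    norm_num
  have Ih : Integrable h P := by
    rw [hint]
    exact (hfLp t ht).congr (ae_of_all _ fun x => (hprodpt x).symm)
  have Ig : Integrable g P := by
    rw [hint]; exact aux_int_log hfm hf0 hfLp s hs
  have Ihg : Integrable (fun x => h x * g x) P := by
    rw [hint]
    refine (aux_int_log hfm hf0 hfLp t ht).congr (ae_of_all _ fun x => ?_)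
    simp only [hh, hg, ← mul_assoc, hprodpt x]
  have vh : ∫ x, h x ∂P = (∫ x, f x ^ t ∂μ) / ∫ x, f x ^ s ∂μ := by
    rw [hval]
    congr 1
    exact integral_congr_ae (ae_of_all _ fun x => hprodpt x)
  have vg : ∫ x, g x ∂P = (∫ x, f x ^ s * Real.log (f x) ∂μ) / ∫ x, f x ^ s ∂μ := hval g
  have vhg : ∫ x, h x * g x ∂P
      = (∫ x, f x ^ t * Real.log (f x) ∂μ) / ∫ x, f x ^ s ∂μ := by
    rw [hval]
    congr 1
    refine integral_congr_ae (ae_of_all _ fun x => ?_)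
    simp only [hh, hg, ← mul_assoc, hprodpt x]
  set Q : Measure (M × M) := P.prod P with hQ
  have hQprob : IsProbabilityMeasure Q := by rw [hQ]; infer_instance
  set F : M × M → ℝ := fun z => (h z.1 - h z.2) * (g z.1 - g z.2) with hF
  have h1 : Integrable (fun z : M × M => (h z.1 * g z.1) * (1:ℝ)) Q :=
    Ihg.mul_prod (integrable_const (1:ℝ))
  have h2 : Integrable (fun z : M × M => (1:ℝ) * (h z.2 * g z.2)) Q :=
    (integrable_const (1:ℝ)).mul_prod Ihg
  have h3 : Integrable (fun z : M × M => h z.1 * g z.2) Q := Ih.mul_prod Ig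
  have h4 : Integrable (fun z : M × M => g z.1 * h z.2) Q := Ig.mul_prod Ih
  have hA : Integrable (fun z : M × M => h z.1 * g z.1 * 1 + 1 * (h z.2 * g z.2) - h z.1 * g z.2) Q :=
    (h1.add h2).sub h3
  have hB : Integrable (fun z : M × M => h z.1 * g z.1 * 1 + 1 * (h z.2 * g z.2)) Q := h1.add h2
  have hC : Integrable (fun z : M × M =>
      h z.1 * g z.1 * 1 + 1 * (h z.2 * g z.2) - h z.1 * g z.2 - g z.1 * h z.2) Q := hA.sub h4
  have hFint : Integrable F Q := by
    refine hC.congr (ae_of_all _ fun z => ?_)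
    simp only [hF]; ring
  have haepos : ∀ᵐ z ∂Q, 0 < f z.1 ∧ 0 < f z.2 := by
    rw [hQ]
    rw [Measure.ae_prod_iff_ae_ae]
    · filter_upwards [hpos] with x hx
      filter_upwards [hpos] with y hy
      exact ⟨hx, hy⟩
    · have hms : MeasurableSet {x : M | 0 < f x} := measurableSet_lt measurable_const hfm
      exact (hms.preimage measurable_fst).inter (hms.preimage measurable_snd)
  have hFnn : 0 ≤ᵐ[Q] F := by
    filter_upwards [haepos] with z hz
    obtain ⟨h1z, h2z⟩ := hz
    simp only [hF, Pi.zero_apply]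
    rcases le_total (f z.1) (f z.2) with hle | hle
    · have e1 : h z.1 ≤ h z.2 := Real.rpow_le_rpow (hf0 z.1) hle hts.le
      have e2 : g z.1 ≤ g z.2 := Real.log_le_log h1z hle
      nlinarith
    · have e1 : h z.2 ≤ h z.1 := Real.rpow_le_rpow (hf0 z.2) hle hts.le
      have e2 : g z.2 ≤ g z.1 := Real.log_le_log h2z hle
      exact mul_nonneg (by linarith) (by linarith)
  have hFnonneg : 0 ≤ ∫ z, F z ∂Q := integral_nonneg_of_ae hFnn
  have hFval : ∫ z, F z ∂Q
      = 2 * (∫ x, h x * g x ∂P) - 2 * ((∫ x, h x ∂P) * (∫ x, g x ∂P)) := by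
    have expand : F = fun z => (h z.1 * g z.1) * (1:ℝ) + (1:ℝ) * (h z.2 * g z.2)
        - h z.1 * g z.2 - g z.1 * h z.2 := by
      funext z; simp only [hF]; ring
    rw [expand]
    rw [integral_sub hA h4, integral_sub hB h3, integral_add h1 h2]
    rw [hQ]
    rw [integral_prod_mul (fun x => h x * g x) (fun _ => (1:ℝ)),
      integral_prod_mul (fun _ => (1:ℝ)) (fun x => h x * g x),
      integral_prod_mul h g, integral_prod_mul g h]
    simp [integral_const]
    ring
  rw [hFval] at hFnonneg
  have key : (∫ x, h x ∂P) * (∫ x, g x ∂P) ≤ ∫ x, h x * g x ∂P := by linarith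
  rw [vh, vg, vhg] at key
  rw [div_le_div_iff₀ hZs hZt]
  have hkey2 := mul_le_mul_of_nonneg_right key (le_of_lt hZs)
  rw [div_mul_cancel₀ _ hZs.ne'] at hkey2
  have heq : (∫ x, f x ^ t ∂μ) / (∫ x, f x ^ s ∂μ)
        * ((∫ x, f x ^ s * Real.log (f x) ∂μ) / ∫ x, f x ^ s ∂μ) * (∫ x, f x ^ s ∂μ)
      = (∫ x, f x ^ s * Real.log (f x) ∂μ) * (∫ x, f x ^ t ∂μ) / (∫ x, f x ^ s ∂μ) := by
    field_simp
  rw [heq] at hkey2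
  calc (∫ x, f x ^ s * Real.log (f x) ∂μ) * (∫ x, f x ^ t ∂μ)
      = (∫ x, f x ^ s * Real.log (f x) ∂μ) * (∫ x, f x ^ t ∂μ)
          / (∫ x, f x ^ s ∂μ) * (∫ x, f x ^ s ∂μ) := by
        field_simp
    _ ≤ (∫ x, f x ^ t * Real.log (f x) ∂μ) * (∫ x, f x ^ s ∂μ) :=
        mul_le_mul_of_nonneg_right hkey2 hZs.le

end Aux

/-- If `f` is not `μ`-a.e. zero, the normalized entropy functional
`Φ(r) := (∫ f^r ln(f^r) dμ)/(∫ f^r dμ) − ln (∫ f^r dμ)` (with the convention `0 · ln 0 = 0`,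
which holds automatically since `Real.log 0 = 0`) is nondecreasing in `r` on `(0, ∞)`. -/
theorem stmt5 {M : Type*} [MeasurableSpace M] (μ : Measure M) [SigmaFinite μ]
    (f : M → ℝ) (hfm : Measurable f) (hf0 : ∀ x, 0 ≤ f x)
    (hfLp : ∀ r : ℝ, 0 < r → Integrable (fun x => f x ^ r) μ)
    (hne : ¬ (f =ᵐ[μ] (fun _ => 0))) :
    MonotoneOn
      (fun r : ℝ =>
        (∫ x, f x ^ r * Real.log (f x ^ r) ∂μ) / (∫ x, f x ^ r ∂μ)
          - Real.log (∫ x, f x ^ r ∂μ))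
      (Set.Ioi (0 : ℝ)) := by
  have hrw : ∀ r : ℝ, 0 < r →
      ∫ x, f x ^ r * Real.log (f x ^ r) ∂μ = r * ∫ x, f x ^ r * Real.log (f x) ∂μ := by
    intro r hr
    rw [← integral_const_mul]
    refine integral_congr_ae (ae_of_all _ fun x => ?_)
    simp only
    rcases eq_or_lt_of_le (hf0 x) with h | h
    · rw [← h, Real.zero_rpow hr.ne']; ring
    · rw [Real.log_rpow h]; ring
  intro a ha b hb hab
  simp only [Set.mem_Ioi] at ha hb
  rcases eq_or_lt_of_le hab with rfl | hlt
  · exact le_refl _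
  simp only
  rw [hrw a ha, hrw b hb]
  have hZa : 0 < ∫ x, f x ^ a ∂μ := aux_Zpos hf0 hfLp hne a ha
  have hZb : 0 < ∫ x, f x ^ b ∂μ := aux_Zpos hf0 hfLp hne b hb
  have h1 := aux_ineq1 hfm hf0 hfLp hne ha hlt
  have h2 := aux_ineq2 hfm hf0 hfLp hne ha hlt
  set Da := (∫ x, f x ^ a * Real.log (f x) ∂μ) / ∫ x, f x ^ a ∂μ with hDa
  set Db := (∫ x, f x ^ b * Real.log (f x) ∂μ) / ∫ x, f x ^ b ∂μ with hDb
  rw [mul_div_assoc, mul_div_assoc, ← hDa, ← hDb]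
  have h3 : a * Da ≤ a * Db := mul_le_mul_of_nonneg_left h2 ha.le
  nlinarith [h1, h3]
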